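/- Let D ⊆ ℝ^m be a nonempty compact set, x ∈ ℝ^K, and g : ℝ^K × ℝ^m → ℝ (with only the values g(y, z) for z ∈ D relevant). Assume: (A1) g is bounded on ℝ^K × D and g(·, z) is differentiable at x uniformly in z ∈ D, i.e., there exist vectors D_x g(x,z) ∈ ℝ^K such that for every ε > 0 there is δ > 0 with |g(y,z) − g(x,z) − ⟨D_x g(x,z), y − x⟩| ≤ ε·‖y − x‖ for all z ∈ D and all y with ‖y − x‖ < δ; (A2) z ↦ D_x g(x, z) is continuous on D and z ↦ g(x, z) is lower semicontinuous on D. Define V(y) := inf_{z∈D} g(y, z), P̃_D(x) := {z ∈ D : V(x) = g(x,z)}, and Y(x) := {D_x g(x,z) : z ∈ P̃_D(x)}. Then Y(x) is nonempty and the superdifferential satisfies D⁺V(x) = closed convex hull of Y(x). -/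

import Mathlib

open Filter Topology
open scoped RealInnerProductSpace

/-- The superdifferential `D⁺V(x)`: the set of `p` with
`limsup_{y→x} (V(y) − V(x) − ⟪p, y − x⟫)/‖y − x‖ ≤ 0`. -/
noncomputable def superDiff {K : ℕ} (V : EuclideanSpace ℝ (Fin K) → ℝ)
    (x : EuclideanSpace ℝ (Fin K)) : Set (EuclideanSpace ℝ (Fin K)) :=
  {p | Filter.limsup
      (fun y => (((V y - V x - ⟪p, y - x⟫) / ‖y - x‖ : ℝ) : EReal)) (𝓝[≠] x)
    ≤ 0}

/-- A lower semicontinuous function on a nonempty compact set, bounded below,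
attains its minimum. -/
lemma lsc_min {α : Type*} [MetricSpace α] {D : Set α} (hcomp : IsCompact D)
    (hne : D.Nonempty) {f : α → ℝ} (hf : LowerSemicontinuousOn f D)
    (hbd : BddBelow (f '' D)) : ∃ z ∈ D, ∀ z' ∈ D, f z ≤ f z' := by
  set c := sInf (f '' D) with hc
  obtain ⟨u, huD, hu⟩ : ∃ u : ℕ → α, (∀ n, u n ∈ D) ∧ ∀ n, f (u n) < c + 1/(n+1) := by
    have : ∀ n : ℕ, ∃ z ∈ D, f z < c + 1/(n+1) := by
      intro n
      have hlt : c < c + 1/(n+1) := by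
        have : (0:ℝ) < 1/(n+1) := by positivity
        linarith
      obtain ⟨y, hy, hy2⟩ := exists_lt_of_csInf_lt (hne.image f) hlt
      obtain ⟨z, hz, rfl⟩ := hy
      exact ⟨z, hz, hy2⟩
    choose u h1 h2 using this
    exact ⟨u, h1, h2⟩
  obtain ⟨z, hzD, φ, hφ, hlim⟩ := hcomp.tendsto_subseq huD
  refine ⟨z, hzD, fun z' hz' => ?_⟩
  have hcle : c ≤ f z' := csInf_le hbd ⟨z', hz', rfl⟩
  have hfz : f z ≤ c := by
    by_contra h
    push_neg at h
    obtain ⟨y, hy1, hy2⟩ := exists_between h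
    have hev := hf z hzD y hy2
    have htd : Tendsto (u ∘ φ) atTop (𝓝[D] z) :=
      tendsto_nhdsWithin_iff.2 ⟨hlim, Eventually.of_forall fun n => huD _⟩
    have hev2 : ∀ᶠ n in atTop, y < f ((u ∘ φ) n) := htd.eventually hev
    have hev3 : ∀ᶠ n : ℕ in atTop, c + 1/(φ n + 1) < y := by
      have : Tendsto (fun n : ℕ => c + 1/((φ n : ℝ)+1)) atTop (𝓝 (c + 0)) := by
        apply Tendsto.const_add
        apply tendsto_one_div_add_atTop_nhds_zero_nat.comp
        exact hφ.tendsto_atTop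
      rw [add_zero] at this
      exact this.eventually_lt_const hy1
    obtain ⟨n, h1, h2⟩ := (hev2.and hev3).exists
    have := hu (φ n)
    simp only [Function.comp_apply] at h1
    push_cast at h2 this
    linarith
  linarith

/-- Characterization of membership in the superdifferential. -/
lemma mem_superDiff_iff {K : ℕ} {V : EuclideanSpace ℝ (Fin K) → ℝ}
    {x p : EuclideanSpace ℝ (Fin K)} :
    p ∈ superDiff V x ↔ ∀ ε > (0:ℝ), ∀ᶠ y in 𝓝[≠] x,
      (V y - V x - ⟪p, y - x⟫) / ‖y - x‖ ≤ ε := by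
  constructor
  · intro hp ε hε
    have h0 : Filter.limsup
        (fun y => (((V y - V x - ⟪p, y - x⟫) / ‖y - x‖ : ℝ) : EReal)) (𝓝[≠] x)
        < (ε : EReal) := lt_of_le_of_lt hp (by exact_mod_cast hε)
    have := Filter.eventually_lt_of_limsup_lt h0
    filter_upwards [this] with y hy
    exact_mod_cast hy.le
  · intro h
    by_contra hlim
    simp only [superDiff, Set.mem_setOf_eq, not_le] at hlim
    obtain ⟨ε, hε0, hεlt⟩ := EReal.exists_between_coe_real hlim
    have hε0' : (0:ℝ) < ε := by exact_mod_cast hε0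
    have : Filter.limsup
        (fun y => (((V y - V x - ⟪p, y - x⟫) / ‖y - x‖ : ℝ) : EReal)) (𝓝[≠] x)
        ≤ (ε : EReal) := by
      apply Filter.limsup_le_of_le
      · isBoundedDefault
      · filter_upwards [h ε hε0'] with y hy
        exact_mod_cast hy
    exact absurd this (not_le.2 hεlt)

set_option maxHeartbeats 1000000 in
/-- envelope theorem, superdifferential part: for
`V(y) = inf_{z∈D} g(y,z)` with `D` compact nonempty, `g` bounded on `ℝ^K × D`,
`g(·,z)` differentiable at `x` uniformly in `z ∈ D` with derivatives `Dg z`,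
`z ↦ Dg z` continuous on `D` and `z ↦ g(x,z)` lower semicontinuous on `D`,
the set `Y(x) = {Dg z : z ∈ argmin}` is nonempty and
`D⁺V(x) = closed convex hull of Y(x)`. -/
theorem stmt5 {K m : ℕ}
    (D : Set (EuclideanSpace ℝ (Fin m))) (hne : D.Nonempty) (hcomp : IsCompact D)
    (x : EuclideanSpace ℝ (Fin K))
    (g : EuclideanSpace ℝ (Fin K) → EuclideanSpace ℝ (Fin m) → ℝ)
    (Dg : EuclideanSpace ℝ (Fin m) → EuclideanSpace ℝ (Fin K))
    (hbdd : ∃ M : ℝ, ∀ y, ∀ z ∈ D, |g y z| ≤ M)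
    (hdiff : ∀ ε > (0 : ℝ), ∃ δ > (0 : ℝ), ∀ z ∈ D, ∀ y,
      ‖y - x‖ < δ → |g y z - g x z - ⟪Dg z, y - x⟫| ≤ ε * ‖y - x‖)
    (hDgcont : ContinuousOn Dg D)
    (hglsc : LowerSemicontinuousOn (fun z => g x z) D)
    (V : EuclideanSpace ℝ (Fin K) → ℝ)
    (hV : ∀ y, V y = sInf ((fun z => g y z) '' D))
    (Pt : Set (EuclideanSpace ℝ (Fin m))) (hPt : Pt = {z ∈ D | V x = g x z})
    (Y : Set (EuclideanSpace ℝ (Fin K))) (hY : Y = Dg '' Pt) :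
    Y.Nonempty ∧ superDiff V x = closure (convexHull ℝ Y) := by
  subst hY; subst hPt
  obtain ⟨M, hM⟩ := hbdd
  have himg_ne : ∀ y, ((fun z => g y z) '' D).Nonempty := fun y => hne.image _
  have himg_bdd : ∀ y, BddBelow ((fun z => g y z) '' D) := fun y =>
    ⟨-M, by rintro _ ⟨z, hz, rfl⟩; have := (abs_le.1 (hM y z hz)).1; linarith⟩
  have hVle : ∀ y, ∀ z ∈ D, V y ≤ g y z := by
    intro y z hz; rw [hV y]; exact csInf_le (himg_bdd y) ⟨z, hz, rfl⟩
  have hVge : ∀ (y : EuclideanSpace ℝ (Fin K)) (c : ℝ),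
      (∀ z ∈ D, c ≤ g y z) → c ≤ V y := by
    intro y c hc; rw [hV y]
    exact le_csInf (himg_ne y) (by rintro _ ⟨z, hz, rfl⟩; exact hc z hz)
  -- the argmin set is nonempty
  obtain ⟨z₀, hz₀D, hz₀min⟩ := lsc_min hcomp hne hglsc (himg_bdd x)
  have hz₀Pt : z₀ ∈ {z | z ∈ D ∧ V x = g x z} :=
    ⟨hz₀D, le_antisymm (hVle x z₀ hz₀D) (hVge x _ hz₀min)⟩
  have hYne : (Dg '' {z | z ∈ D ∧ V x = g x z}).Nonempty := ⟨Dg z₀, z₀, hz₀Pt, rfl⟩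
  refine ⟨hYne, ?_⟩
  -- Y ⊆ superDiff
  have hYsub : Dg '' {z | z ∈ D ∧ V x = g x z} ⊆ superDiff V x := by
    rintro _ ⟨z, ⟨hzD, hzV⟩, rfl⟩
    rw [mem_superDiff_iff]
    intro ε hε
    obtain ⟨δ, hδ, hδ'⟩ := hdiff ε hε
    have h1 : ∀ᶠ y in 𝓝[≠] x, ‖y - x‖ < δ := by
      apply Filter.Eventually.filter_mono nhdsWithin_le_nhds
      filter_upwards [Metric.ball_mem_nhds x hδ] with y hy
      rwa [Metric.mem_ball, dist_eq_norm] at hy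
    filter_upwards [h1, self_mem_nhdsWithin] with y hy hy'
    have hyx : y ≠ x := hy'
    have hnorm : (0:ℝ) < ‖y - x‖ := by rw [norm_pos_iff, sub_ne_zero]; exact hyx
    have hd := (abs_le.1 (hδ' z hzD y hy)).2
    have hVy : V y ≤ g y z := hVle y z hzD
    rw [div_le_iff₀ hnorm]
    linarith [hzV]
  -- superDiff is convex
  have hconv : Convex ℝ (superDiff V x) := by
    intro p hp q hq a b ha hb hab
    rw [mem_superDiff_iff] at hp hq ⊢
    intro ε hε
    filter_upwards [hp ε hε, hq ε hε, self_mem_nhdsWithin] with y h1 h2 hy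
    have hyx : y ≠ x := hy
    have hnorm : (0:ℝ) < ‖y - x‖ := by rw [norm_pos_iff, sub_ne_zero]; exact hyx
    have hin : ⟪a • p + b • q, y - x⟫ = a * ⟪p, y - x⟫ + b * ⟪q, y - x⟫ := by
      rw [inner_add_left, real_inner_smul_left, real_inner_smul_left]
    have hnum : V y - V x - ⟪a • p + b • q, y - x⟫
        = a * (V y - V x - ⟪p, y - x⟫) + b * (V y - V x - ⟪q, y - x⟫) := by
      rw [hin]; linear_combination (V y - V x) * hab.symm
    rw [hnum, add_div, mul_div_assoc, mul_div_assoc]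
    have e1 : a * ((V y - V x - ⟪p, y - x⟫) / ‖y - x‖) ≤ a * ε :=
      mul_le_mul_of_nonneg_left h1 ha
    have e2 : b * ((V y - V x - ⟪q, y - x⟫) / ‖y - x‖) ≤ b * ε :=
      mul_le_mul_of_nonneg_left h2 hb
    have e3 : a * ε + b * ε = ε := by rw [← add_mul, hab, one_mul]
    linarith
  -- superDiff is closed
  have hclosed : closure (superDiff V x) ⊆ superDiff V x := by
    intro p hp
    rw [mem_superDiff_iff]
    intro ε hε
    obtain ⟨q, hq, hqd⟩ := Metric.mem_closure_iff.1 hp (ε/2) (by positivity)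
    rw [mem_superDiff_iff] at hq
    filter_upwards [hq (ε/2) (by positivity), self_mem_nhdsWithin] with y h1 hy
    have hyx : y ≠ x := hy
    have hnorm : (0:ℝ) < ‖y - x‖ := by rw [norm_pos_iff, sub_ne_zero]; exact hyx
    have hdist : ‖q - p‖ < ε/2 := by
      rw [dist_eq_norm] at hqd
      calc ‖q - p‖ = ‖p - q‖ := norm_sub_rev _ _
        _ < ε/2 := hqd
    have hinner : ⟪q - p, y - x⟫ ≤ ‖q - p‖ * ‖y - x‖ := real_inner_le_norm _ _
    have hnum : V y - V x - ⟪p, y - x⟫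
        = (V y - V x - ⟪q, y - x⟫) + ⟪q - p, y - x⟫ := by
      rw [inner_sub_left]; ring
    rw [hnum, add_div]
    have h2 : ⟪q - p, y - x⟫ / ‖y - x‖ ≤ ‖q - p‖ := by
      rw [div_le_iff₀ hnorm]; exact hinner
    linarith
  -- hard direction: superDiff ⊆ closed convex hull of Y
  have hhard : superDiff V x ⊆ closure (convexHull ℝ (Dg '' {z | z ∈ D ∧ V x = g x z})) := by
    intro p hp
    by_contra hpC
    set Y' := Dg '' {z | z ∈ D ∧ V x = g x z} with hY'
    have hCconv : Convex ℝ (closure (convexHull ℝ Y')) := (convex_convexHull ℝ Y').closure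
    obtain ⟨f, u, hfu, hfb⟩ :=
      geometric_hahn_banach_point_closed hCconv isClosed_closure hpC
    set w₀ := (InnerProductSpace.toDual ℝ (EuclideanSpace ℝ (Fin K))).symm f with hw₀def
    have hfw : ∀ v, ⟪w₀, v⟫ = f v := fun v => InnerProductSpace.toDual_symm_apply
    have hYC : ∀ z ∈ {z | z ∈ D ∧ V x = g x z}, u < ⟪w₀, Dg z⟫ := by
      intro z hz
      rw [hfw]
      exact hfb (Dg z) (subset_closure (subset_convexHull ℝ _ ⟨z, hz, rfl⟩))
    have hw₀ne : w₀ ≠ 0 := by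
      intro h0
      have h1 := hYC z₀ hz₀Pt
      have h2 : ⟪w₀, p⟫ = f p := hfw p
      rw [h0] at h1 h2
      simp only [inner_zero_left] at h1 h2
      rw [← h2] at hfu
      linarith
    set nw := ‖w₀‖ with hnw
    have hnwpos : 0 < nw := norm_pos_iff.2 hw₀ne
    set w := nw⁻¹ • w₀ with hwdef
    have hwnorm : ‖w‖ = 1 := by
      rw [hwdef, norm_smul, Real.norm_eq_abs, abs_inv, abs_of_pos hnwpos]
      exact inv_mul_cancel₀ hnwpos.ne'
    set c := u / nw with hcdef
    have hwp : ⟪w, p⟫ = f p / nw := by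
      rw [hwdef, real_inner_smul_left, hfw]; ring
    set η := c - ⟪w, p⟫ with hηdef
    have hηpos : 0 < η := by
      rw [hηdef, hcdef, hwp, sub_pos]
      exact (div_lt_div_iff_of_pos_right hnwpos).2 hfu
    have hU : ∀ z ∈ {z | z ∈ D ∧ V x = g x z}, c < ⟪w, Dg z⟫ := by
      intro z hz
      have h1 := hYC z hz
      have h2 : ⟪w, Dg z⟫ = ⟪w₀, Dg z⟫ / nw := by
        rw [hwdef, real_inner_smul_left]; ring
      rw [h2, hcdef]
      exact (div_lt_div_iff_of_pos_right hnwpos).2 h1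
    -- the complement set D' and the gap ρ
    set D' := {z | z ∈ D ∧ ⟪w, Dg z⟫ ≤ c} with hD'def
    have hD'sub : D' ⊆ D := fun z hz => hz.1
    have hD'comp : IsCompact D' := by
      apply hcomp.of_isClosed_subset ?_ hD'sub
      have heq : D' = D ∩ (fun z => ⟪w, Dg z⟫) ⁻¹' (Set.Iic c) := by
        ext z; simp [hD'def, Set.mem_sep_iff, and_comm]
      rw [heq]
      exact ContinuousOn.preimage_isClosed_of_isClosed
        (continuousOn_const.inner hDgcont) hcomp.isClosed isClosed_Iic
    obtain ⟨ρ, hρpos, hρ⟩ : ∃ ρ > (0:ℝ), ∀ z ∈ D', V x + ρ ≤ g x z := by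
      rcases D'.eq_empty_or_nonempty with hD'e | hD'ne
      · exact ⟨1, one_pos, by rw [hD'e]; simp⟩
      · have hbd' : BddBelow ((fun z => g x z) '' D') :=
          (himg_bdd x).mono (Set.image_mono hD'sub)
        obtain ⟨z₁, hz₁D', hz₁min⟩ := lsc_min hD'comp hD'ne (hglsc.mono hD'sub) hbd'
        have hz₁D : z₁ ∈ D := hz₁D'.1
        have hgt : V x < g x z₁ := by
          rcases lt_or_eq_of_le (hVle x z₁ hz₁D) with h | h
          · exact h
          · exact absurd hz₁D'.2 (not_le.2 (hU z₁ ⟨hz₁D, h⟩))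
        exact ⟨g x z₁ - V x, by linarith, fun z hz => by have := hz₁min z hz; linarith⟩
    obtain ⟨Cb, hCb⟩ := hcomp.exists_bound_of_continuousOn hDgcont
    obtain ⟨δ, hδpos, hδ⟩ := hdiff (η/4) (by positivity)
    rw [mem_superDiff_iff] at hp
    have hev : {y | (V y - V x - ⟪p, y - x⟫) / ‖y - x‖ ≤ η/4} ∈ 𝓝[≠] x :=
      hp (η/4) (by positivity)
    obtain ⟨δ₂, hδ₂pos, hδ₂⟩ := Metric.mem_nhdsWithin_iff.1 hev
    set A := Cb + η + |⟪w, p⟫| + 1 with hAdef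
    have hCb0 : 0 ≤ Cb := le_trans (norm_nonneg _) (hCb z₀ hz₀D)
    have hApos : 0 < A := by positivity
    set t := min (min (δ/2) (δ₂/2)) (ρ/A) with htdef
    have htpos : 0 < t :=
      lt_min (lt_min (by positivity) (by positivity)) (by positivity)
    set y := x + t • w with hydef
    have hyx : y - x = t • w := by rw [hydef]; abel
    have hynorm : ‖y - x‖ = t := by
      rw [hyx, norm_smul, hwnorm, mul_one, Real.norm_eq_abs, abs_of_pos htpos]
    have hyne : y ≠ x := by
      intro h
      rw [h, sub_self, norm_zero] at hynorm
      exact absurd hynorm.symm (ne_of_gt htpos)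
    have hytδ : ‖y - x‖ < δ := by
      rw [hynorm]
      calc t ≤ δ/2 := (min_le_left _ _).trans (min_le_left _ _)
        _ < δ := by linarith
    have htA : t * A ≤ ρ := by
      have h1 : t ≤ ρ/A := min_le_right _ _
      calc t * A ≤ (ρ/A) * A := mul_le_mul_of_nonneg_right h1 hApos.le
        _ = ρ := by field_simp
    -- uniform lower bound for g y z
    have hglow : ∀ z ∈ D, V x + t * ⟪w, p⟫ + t * (η/2) ≤ g y z := by
      intro z hzD
      have hd := (abs_le.1 (hδ z hzD y hytδ)).1
      have hinner : ⟪Dg z, y - x⟫ = t * ⟪w, Dg z⟫ := by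
        rw [hyx, real_inner_smul_right, real_inner_comm]
      rw [hinner, hynorm] at hd
      -- hd : -(η/4 * t) ≤ g y z - g x z - t * ⟪w, Dg z⟫
      by_cases hzU : c < ⟪w, Dg z⟫
      · have hgx : V x ≤ g x z := hVle x z hzD
        have hge : ⟪w, p⟫ + η ≤ ⟪w, Dg z⟫ := by rw [hηdef] at *; linarith
        have hmul : t * (⟪w, p⟫ + η) ≤ t * ⟪w, Dg z⟫ :=
          mul_le_mul_of_nonneg_left hge htpos.le
        have e4 : 0 ≤ t * η := by positivity
        clear_value t η
        linarith
      · push_neg at hzU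
        have hgx := hρ z ⟨hzD, hzU⟩
        have hDb : |⟪w, Dg z⟫| ≤ Cb := by
          calc |⟪w, Dg z⟫| ≤ ‖w‖ * ‖Dg z‖ := abs_real_inner_le_norm _ _
            _ = ‖Dg z‖ := by rw [hwnorm, one_mul]
            _ ≤ Cb := hCb z hzD
        have e1 : t * (-Cb) ≤ t * ⟪w, Dg z⟫ :=
          mul_le_mul_of_nonneg_left (by linarith [neg_abs_le ⟪w, Dg z⟫]) htpos.le
        have e2 : t * ⟪w, p⟫ ≤ t * |⟪w, p⟫| :=
          mul_le_mul_of_nonneg_left (le_abs_self _) htpos.le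
        have e3 : t * A = t * Cb + t * η + t * |⟪w, p⟫| + t := by rw [hAdef]; ring
        have e4 : 0 ≤ t * η := by positivity
        clear_value t η
        linarith [htpos.le]
    have hVy := hVge y _ hglow
    have hymem : y ∈ Metric.ball x δ₂ ∩ {x}ᶜ := by
      constructor
      · rw [Metric.mem_ball, dist_eq_norm, hynorm]
        calc t ≤ δ₂/2 := (min_le_left _ _).trans (min_le_right _ _)
          _ < δ₂ := by linarith
      · exact hyne
    have hq : (V y - V x - ⟪p, y - x⟫) / ‖y - x‖ ≤ η/4 := hδ₂ hymem
    have hpin : ⟪p, y - x⟫ = t * ⟪w, p⟫ := by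
      rw [hyx, real_inner_smul_right, real_inner_comm]
    rw [hpin, hynorm] at hq
    have hq2 : η/2 ≤ (V y - V x - t * ⟪w, p⟫) / t := by
      rw [le_div_iff₀ htpos]; linarith
    linarith
  -- combine
  apply subset_antisymm hhard
  intro p hpC
  exact hclosed (closure_mono (convexHull_min hYsub hconv) hpC)
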